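/- Let n, N_G be natural numbers, N_s a positive natural number, and d = 4^n. On a probability space let c₁,…,c_{N_G} be mutually independent square-integrable random vectors in ℝ^d satisfying, for every k and all coordinates i, j: E[c_k(i)] = 1 and |E[c_k(i) c_k(j)] − 1| ≤ 2/N_s. Let G₁,…,G_{N_G} be d×d real orthogonal matrices, v₀ ∈ ℝ^d with ‖v₀‖ = 1, V₀ = v₀, V_k = diag(c_k) · G_k · V_{k−1}, and μ = G_{N_G} ⋯ G₁ v₀. Then for every w ∈ ℝ^d with ‖w‖ ≤ 2^{n/2}, the root-mean-square error satisfies √(E[(wᵀ V_{N_G} − wᵀ μ)²]) ≤ 2^{n/2} √(exp(2 N_G / N_s) − 1). -/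

import Mathlib

open scoped BigOperators
open Matrix MeasureTheory ProbabilityTheory

/-- Euclidean norm of a real vector. -/
noncomputable def vecEnorm {ι : Type*} [Fintype ι] (v : ι → ℝ) : ℝ :=
  Real.sqrt (∑ i, v i ^ 2)

lemma orth_sum_sq {m : Type*} [Fintype m] [DecidableEq m]
    {A : Matrix m m ℝ} (hA : A ∈ Matrix.orthogonalGroup m ℝ) (v : m → ℝ) :
    ∑ i, (A.mulVec v i) ^ 2 = ∑ i, v i ^ 2 := by
  have h1 : Aᵀ * A = 1 := by
    have := (Matrix.mem_orthogonalGroup_iff' (n := m) (R := ℝ)).1 hA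
    simpa [Matrix.star_eq_conjTranspose, Matrix.conjTranspose] using this
  have h2 : (A *ᵥ v) ⬝ᵥ (A *ᵥ v) = v ⬝ᵥ v := by
    rw [dotProduct_mulVec, Matrix.vecMul_mulVec, h1]
    simp [Matrix.vecMul_one]
  simpa [dotProduct, sq] using h2

lemma indep_memLp_mul {Ω : Type*} [MeasurableSpace Ω] {μ : Measure Ω}
    {X Y : Ω → ℝ} (h : IndepFun X Y μ) (hX : MemLp X 2 μ) (hY : MemLp Y 2 μ) :
    MemLp (fun ω => X ω * Y ω) 2 μ := by
  have hsq : IndepFun (fun ω => X ω ^ 2) (fun ω => Y ω ^ 2) μ :=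
    h.comp (measurable_id.pow_const 2) (measurable_id.pow_const 2)
  have hint : Integrable (fun ω => X ω ^ 2 * Y ω ^ 2) μ :=
    hsq.integrable_mul hX.integrable_sq hY.integrable_sq
  exact (memLp_two_iff_integrable_sq (hX.aestronglyMeasurable.mul hY.aestronglyMeasurable)).2 (by simpa [mul_pow] using hint)

/-- Deterministic recursion computing the state from noise coefficients. -/
noncomputable def Fmat {NG : ℕ} {d : Type*} [Fintype d] [DecidableEq d]
    (G : Fin NG → Matrix d d ℝ) (v₀ : d → ℝ) : ℕ → (Fin NG → d → ℝ) → d → ℝ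
  | 0, _ => v₀
  | (m + 1), x =>
      if h : m < NG then fun i => x ⟨m, h⟩ i * (G ⟨m, h⟩).mulVec (Fmat G v₀ m x) i
      else Fmat G v₀ m x

/-- Noise-free state sequence. -/
noncomputable def museq {NG : ℕ} {d : Type*} [Fintype d] [DecidableEq d]
    (G : Fin NG → Matrix d d ℝ) (v₀ : d → ℝ) : ℕ → d → ℝ
  | 0 => v₀
  | (m + 1) =>
      if h : m < NG then (G ⟨m, h⟩).mulVec (museq G v₀ m) else museq G v₀ m

lemma Fmat_measurable {NG : ℕ} {d : Type*} [Fintype d] [DecidableEq d]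
    (G : Fin NG → Matrix d d ℝ) (v₀ : d → ℝ) (m : ℕ) :
    Measurable (Fmat G v₀ m) := by
  induction m with
  | zero => exact measurable_const
  | succ m ih =>
    have heq : Fmat G v₀ (m + 1) = fun x =>
        if h : m < NG then (fun i => x ⟨m, h⟩ i * (G ⟨m, h⟩).mulVec (Fmat G v₀ m x) i)
        else Fmat G v₀ m x := rfl
    rw [heq]
    split
    · refine measurable_pi_lambda _ fun i => ?_
      refine Measurable.mul ?_ ?_
      · exact (measurable_pi_apply i).comp (measurable_pi_apply _)
      · simp only [Matrix.mulVec, dotProduct]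
        exact Finset.measurable_sum _ fun j _ =>
          ((measurable_pi_apply j).comp ih).const_mul _
    · exact ih

lemma Fmat_congr {NG : ℕ} {d : Type*} [Fintype d] [DecidableEq d]
    (G : Fin NG → Matrix d d ℝ) (v₀ : d → ℝ) (m : ℕ) (x y : Fin NG → d → ℝ)
    (hxy : ∀ k : Fin NG, (k : ℕ) < m → x k = y k) :
    Fmat G v₀ m x = Fmat G v₀ m y := by
  induction m with
  | zero => rfl
  | succ m ih =>
    have hm : Fmat G v₀ m x = Fmat G v₀ m y :=
      ih fun k hk => hxy k (Nat.lt_succ_of_lt hk)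
    rw [Fmat, Fmat]
    split
    · rename_i h
      rw [hm, hxy ⟨m, h⟩ (Nat.lt_succ_self m)]
    · exact hm

lemma museq_sum_sq {NG : ℕ} {d : Type*} [Fintype d] [DecidableEq d]
    (G : Fin NG → Matrix d d ℝ) (hG : ∀ k, G k ∈ Matrix.orthogonalGroup d ℝ)
    (v₀ : d → ℝ) (m : ℕ) :
    ∑ i, museq G v₀ m i ^ 2 = ∑ i, v₀ i ^ 2 := by
  induction m with
  | zero => rfl
  | succ m ih =>
    rw [museq]
    split
    · rename_i h
      rw [orth_sum_sq (hG ⟨m, h⟩), ih]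
    · exact ih

lemma museq_eq_prod {NG : ℕ} {d : Type*} [Fintype d] [DecidableEq d]
    (G : Fin NG → Matrix d d ℝ) (v₀ : d → ℝ) :
    museq G v₀ NG = (((List.ofFn G).reverse).prod).mulVec v₀ := by
  have key : ∀ m, m ≤ NG →
      museq G v₀ m = ((((List.ofFn G).take m).reverse).prod).mulVec v₀ := by
    intro m hm
    induction m with
    | zero => simp [museq, Matrix.one_mulVec]
    | succ m ih =>
      have hmNG : m < NG := hm
      have htake : (List.ofFn G).take (m + 1) =
          (List.ofFn G).take m ++ [G ⟨m, hmNG⟩] := by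
        rw [List.take_succ]
        congr 1
        rw [List.getElem?_eq_getElem (by simpa using hmNG)]
        simp
      rw [museq]
      rw [dif_pos hmNG, ih (le_of_lt hmNG), htake]
      rw [List.reverse_append]
      simp [Matrix.mulVec_mulVec]
  have := key NG le_rfl
  rwa [List.take_of_length_le (by simp)] at this

/-- Proposition 3, Pauli-channel form: for an `n`-qubit circuit of `N_G`
gates protected by Monte Carlo-based QEM with `N_s` effective executions, the RMSE of the
computational result satisfies
`√E[(wᵀV_{N_G} - wᵀμ)²] ≤ 2^{n/2} √(exp(2 N_G/N_s) - 1)` whenever `‖w‖ ≤ 2^{n/2}`. -/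
theorem stmt6 (n NG Ns : ℕ) (hNs : 0 < Ns)
    {Ω : Type*} [MeasurableSpace Ω] (μ : Measure Ω) [IsProbabilityMeasure μ]
    (c : Fin NG → Ω → (Fin (4 ^ n) → ℝ))
    (hindep : iIndepFun c μ)
    (hL2 : ∀ k i, MemLp (fun ω => c k ω i) 2 μ)
    (hmean : ∀ k i, ∫ ω, c k ω i ∂μ = 1)
    (hsec : ∀ k i j, |(∫ ω, c k ω i * c k ω j ∂μ) - 1| ≤ 2 / Ns)
    (G : Fin NG → Matrix (Fin (4 ^ n)) (Fin (4 ^ n)) ℝ)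
    (hG : ∀ k, G k ∈ Matrix.orthogonalGroup (Fin (4 ^ n)) ℝ)
    (v₀ : Fin (4 ^ n) → ℝ) (hv₀ : vecEnorm v₀ = 1)
    (V : ℕ → Ω → (Fin (4 ^ n) → ℝ)) (hV0 : ∀ ω, V 0 ω = v₀)
    (hV : ∀ k : Fin NG, ∀ ω, V (k + 1) ω = fun i => c k ω i * (G k).mulVec (V k ω) i)
    (μN : Fin (4 ^ n) → ℝ) (hμN : μN = (((List.ofFn G).reverse).prod).mulVec v₀)
    (w : Fin (4 ^ n) → ℝ) (hw : vecEnorm w ≤ Real.sqrt (2 ^ n)) :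
    Real.sqrt (∫ ω, (w ⬝ᵥ V NG ω - w ⬝ᵥ μN) ^ 2 ∂μ) ≤
      Real.sqrt (2 ^ n) * Real.sqrt (Real.exp (2 * NG / Ns) - 1) := by
  classical
  -- measurable modifications of the noise coefficients
  set c' : Fin NG → Ω → Fin (4 ^ n) → ℝ :=
    fun k ω i => ((hL2 k i).1.mk (fun ω => c k ω i)) ω with hc'def
  have hc'meas : ∀ k, Measurable (c' k) :=
    fun k => measurable_pi_lambda _ fun i => (hL2 k i).1.stronglyMeasurable_mk.measurable
  have hc'aei : ∀ k i, (fun ω => c k ω i) =ᵐ[μ] fun ω => c' k ω i :=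
    fun k i => (hL2 k i).1.ae_eq_mk
  have hall : ∀ᵐ ω ∂μ, ∀ k, c k ω = c' k ω := by
    rw [ae_all_iff]
    intro k
    have h2 : ∀ᵐ ω ∂μ, ∀ i, c k ω i = c' k ω i := by
      rw [ae_all_iff]; exact fun i => hc'aei k i
    filter_upwards [h2] with ω h using funext h
  have hc'L2 : ∀ k i, MemLp (fun ω => c' k ω i) 2 μ :=
    fun k i => (hL2 k i).ae_eq (hc'aei k i)
  have hc'mean : ∀ k i, ∫ ω, c' k ω i ∂μ = 1 := fun k i => by
    rw [← integral_congr_ae (hc'aei k i)]; exact hmean k i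
  have hc'sec : ∀ k i, (∫ ω, c' k ω i * c' k ω i ∂μ) ≤ 1 + 2 / Ns := fun k i => by
    have heq : ∫ ω, c k ω i * c k ω i ∂μ = ∫ ω, c' k ω i * c' k ω i ∂μ :=
      integral_congr_ae (by filter_upwards [hc'aei k i] with ω h1; rw [h1])
    have h2 := (abs_le.1 (hsec k i i)).2
    rw [heq] at h2
    linarith
  -- independence transfers to the modification
  have hindep' : iIndepFun c' μ := by
    rw [iIndepFun_iff] at hindep ⊢
    intro s f' hf'
    simp only [MeasurableSpace.measurableSet_comap] at hf'
    choose A hAm hAe using hf'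
    set g' : Fin NG → Set Ω := fun i => if h : i ∈ s then c i ⁻¹' A i h else ∅ with hg'
    have hmem : ∀ i (hi : i ∈ s), ∀ ω, (∀ k, c k ω = c' k ω) → (ω ∈ f' i ↔ ω ∈ g' i) := by
      intro i hi ω h
      rw [← hAe i hi]
      simp [hg', dif_pos hi, Set.mem_preimage, h i]
    have haeq : ∀ i, i ∈ s → μ (f' i) = μ (g' i) := by
      intro i hi
      apply measure_congr
      rw [Filter.eventuallyEq_set]
      filter_upwards [hall] with ω h using hmem i hi ω h
    have h1 : μ (⋂ i ∈ s, f' i) = μ (⋂ i ∈ s, g' i) := by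
      apply measure_congr
      rw [Filter.eventuallyEq_set]
      filter_upwards [hall] with ω h
      simp only [Set.mem_iInter]
      exact ⟨fun hf i hi => (hmem i hi ω h).1 (hf i hi),
             fun hf i hi => (hmem i hi ω h).2 (hf i hi)⟩
    rw [h1, Finset.prod_congr rfl haeq]
    exact hindep s fun i hi => MeasurableSpace.measurableSet_comap.2
      ⟨A i hi, hAm i hi, by simp [hg', dif_pos hi]⟩
  -- the random state as a measurable function of the noise
  set V' : ℕ → Ω → Fin (4 ^ n) → ℝ :=
    fun m ω => Fmat G v₀ m (fun k => c' k ω) with hV'def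
  have hVexact : ∀ m, m ≤ NG → ∀ ω, V m ω = Fmat G v₀ m (fun k => c k ω) := by
    intro m
    induction m with
    | zero => intro _ ω; rw [hV0 ω]; rfl
    | succ m ih =>
      intro hm ω
      have hlt : m < NG := hm
      have h1 := hV ⟨m, hlt⟩ ω
      simp only at h1
      rw [h1]
      show _ = if h : m < NG then
        (fun i => (fun k => c k ω) ⟨m, h⟩ i *
          (G ⟨m, h⟩).mulVec (Fmat G v₀ m (fun k => c k ω)) i) else _
      rw [dif_pos hlt, ih (le_of_lt hlt) ω]
  have hVae : ∀ᵐ ω ∂μ, V NG ω = V' NG ω := by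
    filter_upwards [hall] with ω h
    rw [hVexact NG le_rfl ω, hV'def]
    exact congrArg _ (funext fun k => h k)
  -- successor formula for V'
  have hVsucc : ∀ m (hm : m < NG) ω,
      V' (m + 1) ω = fun i => c' ⟨m, hm⟩ ω i * (G ⟨m, hm⟩).mulVec (V' m ω) i := by
    intro m hm ω
    show (if h : m < NG then
      (fun i => (fun k => c' k ω) ⟨m, h⟩ i *
        (G ⟨m, h⟩).mulVec (Fmat G v₀ m (fun k => c' k ω)) i)
      else Fmat G v₀ m (fun k => c' k ω)) = _
    rw [dif_pos hm]
  -- independence of the new noise from the current state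
  have hmulmeas : ∀ (k : Fin NG) i,
      Measurable (fun v : Fin (4 ^ n) → ℝ => (G k).mulVec v i) := by
    intro k i
    simp only [Matrix.mulVec, dotProduct]
    exact Finset.measurable_sum _ fun j _ => (measurable_pi_apply j).const_mul _
  have hpair : ∀ m (hm : m < NG),
      IndepFun (fun ω => c' ⟨m, hm⟩ ω) (fun ω => V' m ω) μ := by
    intro m hm
    have hdisj : Disjoint ({(⟨m, hm⟩ : Fin NG)} : Finset (Fin NG))
        (Finset.Iio (⟨m, hm⟩ : Fin NG)) := by
      simp [Finset.disjoint_left]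
    have H := hindep'.indepFun_finset {(⟨m, hm⟩ : Fin NG)}
      (Finset.Iio (⟨m, hm⟩ : Fin NG)) hdisj hc'meas
    set φ : (({(⟨m, hm⟩ : Fin NG)} : Finset (Fin NG)) → Fin (4 ^ n) → ℝ) →
        Fin (4 ^ n) → ℝ :=
      fun t => t ⟨⟨m, hm⟩, Finset.mem_singleton_self _⟩ with hφdef
    set ψ : ((Finset.Iio (⟨m, hm⟩ : Fin NG) : Finset (Fin NG)) → Fin (4 ^ n) → ℝ) →
        Fin (4 ^ n) → ℝ :=
      fun t => Fmat G v₀ m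
        (fun k => if h : k ∈ Finset.Iio (⟨m, hm⟩ : Fin NG) then t ⟨k, h⟩ else 0) with hψdef
    have hφ : Measurable φ := measurable_pi_apply _
    have hψ : Measurable ψ := by
      refine (Fmat_measurable G v₀ m).comp ?_
      refine measurable_pi_lambda _ fun k => ?_
      by_cases h : k ∈ Finset.Iio (⟨m, hm⟩ : Fin NG)
      · simpa [h] using measurable_pi_apply (⟨k, h⟩ :
          (Finset.Iio (⟨m, hm⟩ : Fin NG) : Finset (Fin NG)))
      · simpa [h] using (measurable_const :
          Measurable (fun _ : ((Finset.Iio (⟨m, hm⟩ : Fin NG) : Finset (Fin NG)) →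
            Fin (4 ^ n) → ℝ) => (0 : Fin (4 ^ n) → ℝ)))
    have hcomp := H.comp hφ hψ
    have heq : (ψ ∘ fun ω (k : (Finset.Iio (⟨m, hm⟩ : Fin NG) : Finset (Fin NG))) =>
        c' k ω) = fun ω => V' m ω := by
      funext ω
      show Fmat G v₀ m _ = Fmat G v₀ m _
      apply Fmat_congr
      intro k hk
      have hk' : k ∈ Finset.Iio (⟨m, hm⟩ : Fin NG) := by
        rw [Finset.mem_Iio]; exact hk
      rw [dif_pos hk']
    rw [heq] at hcomp
    exact hcomp
  -- the main induction: L², mean, second moment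
  have main : ∀ m, m ≤ NG →
      (∀ i, MemLp (fun ω => V' m ω i) 2 μ) ∧
      (∀ i, ∫ ω, V' m ω i ∂μ = museq G v₀ m i) ∧
      (∫ ω, ∑ i, V' m ω i ^ 2 ∂μ) ≤ (1 + 2 / Ns) ^ m := by
    intro m
    induction m with
    | zero =>
      intro _
      refine ⟨fun i => memLp_const _, fun i => by simp [hV'def, Fmat, museq], ?_⟩
      have h1 : ∑ i, v₀ i ^ 2 = 1 := Real.sqrt_eq_one.1 hv₀
      simp [hV'def, Fmat, h1]
    | succ m ih =>
      intro hm1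
      have hlt : m < NG := hm1
      obtain ⟨ihL2, ihmean, ihsq⟩ := ih (le_of_lt hlt)
      set km : Fin NG := ⟨m, hlt⟩ with hkm
      -- L² of the rotated state coordinates
      have GL2 : ∀ i, MemLp (fun ω => (G km).mulVec (V' m ω) i) 2 μ := by
        intro i
        have heq2 : (fun ω => (G km).mulVec (V' m ω) i) =
            fun ω => ∑ j, G km i j * V' m ω j := by
          funext ω; simp [Matrix.mulVec, dotProduct]
        rw [heq2]
        exact memLp_finset_sum _ fun j _ => (ihL2 j).const_mul _
      have hp := hpair m hlt
      have ind1 : ∀ i, IndepFun (fun ω => c' km ω i)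
          (fun ω => (G km).mulVec (V' m ω) i) μ :=
        fun i => hp.comp (measurable_pi_apply i) (hmulmeas km i)
      have ind2 : ∀ i, IndepFun (fun ω => (c' km ω i) ^ 2)
          (fun ω => ((G km).mulVec (V' m ω) i) ^ 2) μ :=
        fun i => (ind1 i).comp (measurable_id.pow_const 2) (measurable_id.pow_const 2)
      have hL2succ : ∀ i, MemLp (fun ω => V' (m + 1) ω i) 2 μ := by
        intro i
        have h2 : (fun ω => V' (m + 1) ω i) =
            fun ω => c' km ω i * (G km).mulVec (V' m ω) i := by
          funext ω; rw [hVsucc m hlt ω]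
        rw [h2]
        exact indep_memLp_mul (ind1 i) (hc'L2 km i) (GL2 i)
      refine ⟨hL2succ, ?_, ?_⟩
      · -- means
        intro i
        have h2 : (fun ω => V' (m + 1) ω i) =
            fun ω => c' km ω i * (G km).mulVec (V' m ω) i := by
          funext ω; rw [hVsucc m hlt ω]
        rw [h2, show (fun ω => c' km ω i * (G km).mulVec (V' m ω) i) =
            ((fun ω => c' km ω i) * fun ω => (G km).mulVec (V' m ω) i) from rfl,
          (ind1 i).integral_mul_eq_mul_integral
          ((hc'L2 km i).integrable one_le_two).aestronglyMeasurable ((GL2 i).integrable one_le_two).aestronglyMeasurable,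
          hc'mean km i, one_mul]
        have h3 : ∫ ω, (G km).mulVec (V' m ω) i ∂μ = ∑ j, G km i j * museq G v₀ m j := by
          have heq2 : (fun ω => (G km).mulVec (V' m ω) i) =
              fun ω => ∑ j, G km i j * V' m ω j := by
            funext ω; simp [Matrix.mulVec, dotProduct]
          rw [heq2, integral_finset_sum _
            (fun j _ => (((ihL2 j).integrable one_le_two).const_mul _))]
          exact Finset.sum_congr rfl fun j _ => by rw [MeasureTheory.integral_const_mul, ihmean j]
        rw [h3]
        show _ = (if h : m < NG then (G ⟨m, h⟩).mulVec (museq G v₀ m) else museq G v₀ m) i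
        rw [dif_pos hlt]
        simp [Matrix.mulVec, dotProduct, hkm]
      · -- second moments
        have hint : ∀ i, Integrable
            (fun ω => (c' km ω i) ^ 2 * ((G km).mulVec (V' m ω) i) ^ 2) μ :=
          fun i => (ind2 i).integrable_mul (hc'L2 km i).integrable_sq (GL2 i).integrable_sq
        have h2 : (fun ω => ∑ i, V' (m + 1) ω i ^ 2) =
            fun ω => ∑ i, (c' km ω i) ^ 2 * ((G km).mulVec (V' m ω) i) ^ 2 := by
          funext ω; rw [hVsucc m hlt ω]
          exact Finset.sum_congr rfl fun i _ => by ring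
        rw [h2, integral_finset_sum _ fun i _ => hint i]
        have h3 : ∀ i, ∫ ω, (c' km ω i) ^ 2 * ((G km).mulVec (V' m ω) i) ^ 2 ∂μ ≤
            (1 + 2 / Ns) * ∫ ω, ((G km).mulVec (V' m ω) i) ^ 2 ∂μ := by
          intro i
          rw [show (fun ω => (c' km ω i) ^ 2 * ((G km).mulVec (V' m ω) i) ^ 2) =
              ((fun ω => (c' km ω i) ^ 2) * fun ω => ((G km).mulVec (V' m ω) i) ^ 2) from rfl,
            (ind2 i).integral_mul_eq_mul_integral
            (hc'L2 km i).integrable_sq.aestronglyMeasurable (GL2 i).integrable_sq.aestronglyMeasurable]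
          have hnn : 0 ≤ ∫ ω, ((G km).mulVec (V' m ω) i) ^ 2 ∂μ :=
            integral_nonneg fun ω => sq_nonneg _
          have hc2 : ∫ ω, (c' km ω i) ^ 2 ∂μ ≤ 1 + 2 / Ns := by
            have := hc'sec km i
            calc ∫ ω, (c' km ω i) ^ 2 ∂μ = ∫ ω, c' km ω i * c' km ω i ∂μ := by
                  simp_rw [sq]
              _ ≤ 1 + 2 / Ns := this
          exact mul_le_mul_of_nonneg_right hc2 hnn
        have h4 : ∑ i, (1 + 2 / (Ns:ℝ)) * ∫ ω, ((G km).mulVec (V' m ω) i) ^ 2 ∂μ =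
            (1 + 2 / Ns) * ∫ ω, ∑ i, V' m ω i ^ 2 ∂μ := by
          rw [← Finset.mul_sum, ← integral_finset_sum _ fun i _ => (GL2 i).integrable_sq]
          congr 1
          apply integral_congr_ae
          filter_upwards with ω
          exact orth_sum_sq (hG km) (V' m ω)
        have hNs0 : (0:ℝ) ≤ 1 + 2 / Ns := by positivity
        calc ∑ i, ∫ ω, (c' km ω i) ^ 2 * ((G km).mulVec (V' m ω) i) ^ 2 ∂μ
            ≤ ∑ i, (1 + 2 / (Ns:ℝ)) * ∫ ω, ((G km).mulVec (V' m ω) i) ^ 2 ∂μ :=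
              Finset.sum_le_sum fun i _ => h3 i
          _ = (1 + 2 / Ns) * ∫ ω, ∑ i, V' m ω i ^ 2 ∂μ := h4
          _ ≤ (1 + 2 / Ns) * (1 + 2 / Ns) ^ m := by
              exact mul_le_mul_of_nonneg_left ihsq hNs0
          _ = (1 + 2 / Ns) ^ (m + 1) := by ring
  obtain ⟨hL2N, hmeanN, hsqN⟩ := main NG le_rfl
  -- identify the noise-free state
  have hμNe : μN = museq G v₀ NG := by rw [hμN, museq_eq_prod]
  have hsumv₀ : ∑ i, v₀ i ^ 2 = 1 := Real.sqrt_eq_one.1 hv₀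
  have hμNsq : ∑ i, μN i ^ 2 = 1 := by rw [hμNe, museq_sum_sq G hG v₀ NG]; exact hsumv₀
  have hwsum : ∑ i, w i ^ 2 ≤ 2 ^ n := by
    have h0 : (0:ℝ) ≤ ∑ i, w i ^ 2 := Finset.sum_nonneg fun i _ => sq_nonneg _
    have h1 : Real.sqrt (∑ i, w i ^ 2) ≤ Real.sqrt (2 ^ n) := hw
    have h2 := pow_le_pow_left₀ (Real.sqrt_nonneg _) h1 2
    rwa [Real.sq_sqrt h0, Real.sq_sqrt (by positivity : (0:ℝ) ≤ (2:ℝ) ^ n)] at h2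
  -- replace V by V'
  have hI : ∫ ω, (w ⬝ᵥ V NG ω - w ⬝ᵥ μN) ^ 2 ∂μ =
      ∫ ω, (w ⬝ᵥ V' NG ω - w ⬝ᵥ μN) ^ 2 ∂μ :=
    integral_congr_ae (by filter_upwards [hVae] with ω h; rw [h])
  -- deviation bound
  set D : Ω → ℝ := fun ω => ∑ i, (V' NG ω i - μN i) ^ 2 with hDdef
  have hDterm : ∀ i, Integrable (fun ω => (V' NG ω i - μN i) ^ 2) μ := by
    intro i
    have := (hL2N i).sub (memLp_const (μN i))
    exact this.integrable_sq
  have hDint : Integrable D μ := by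
    rw [hDdef]
    exact integrable_finset_sum _ fun i _ => hDterm i
  have hptwise : ∀ ω, (w ⬝ᵥ V' NG ω - w ⬝ᵥ μN) ^ 2 ≤ (∑ i, w i ^ 2) * D ω := by
    intro ω
    have heq2 : w ⬝ᵥ V' NG ω - w ⬝ᵥ μN = ∑ i, w i * (V' NG ω i - μN i) := by
      simp [dotProduct, mul_sub, Finset.sum_sub_distrib]
    rw [heq2]
    exact Finset.sum_mul_sq_le_sq_mul_sq _ _ _
  have hIle : ∫ ω, (w ⬝ᵥ V' NG ω - w ⬝ᵥ μN) ^ 2 ∂μ ≤ (∑ i, w i ^ 2) * ∫ ω, D ω ∂μ := by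
    rw [← MeasureTheory.integral_const_mul]
    refine integral_mono_of_nonneg ?_ (hDint.const_mul _) ?_
    · filter_upwards with ω using sq_nonneg _
    · filter_upwards with ω using hptwise ω
  -- compute ∫ D
  have hDeq : ∫ ω, D ω ∂μ = (∫ ω, ∑ i, V' NG ω i ^ 2 ∂μ) - 1 := by
    have hpt : ∀ ω, D ω = (∑ i, V' NG ω i ^ 2) -
        (∑ i, 2 * μN i * V' NG ω i) + ∑ i, μN i ^ 2 := by
      intro ω
      rw [hDdef]
      rw [← Finset.sum_sub_distrib, ← Finset.sum_add_distrib]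
      exact Finset.sum_congr rfl fun i _ => by ring
    have hint1 : Integrable (fun ω => ∑ i, V' NG ω i ^ 2) μ :=
      integrable_finset_sum _ fun i _ => (hL2N i).integrable_sq
    have hint2 : Integrable (fun ω => ∑ i, 2 * μN i * V' NG ω i) μ :=
      integrable_finset_sum _ fun i _ => ((hL2N i).integrable one_le_two).const_mul _
    calc ∫ ω, D ω ∂μ
        = ∫ ω, ((∑ i, V' NG ω i ^ 2) - (∑ i, 2 * μN i * V' NG ω i) + ∑ i, μN i ^ 2) ∂μ := by
          exact integral_congr_ae (by filter_upwards with ω using hpt ω)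
      _ = (∫ ω, ∑ i, V' NG ω i ^ 2 ∂μ) - (∫ ω, ∑ i, 2 * μN i * V' NG ω i ∂μ) +
          ∑ i, μN i ^ 2 := by
          have hint12 : Integrable (fun ω => (∑ i, V' NG ω i ^ 2) -
              ∑ i, 2 * μN i * V' NG ω i) μ := hint1.sub hint2
          rw [integral_add hint12 (integrable_const _),
            integral_sub hint1 hint2, integral_const]
          simp
      _ = (∫ ω, ∑ i, V' NG ω i ^ 2 ∂μ) - 1 := by
          have hmid : ∫ ω, ∑ i, 2 * μN i * V' NG ω i ∂μ = 2 := by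
            rw [integral_finset_sum _ fun i _ =>
              ((hL2N i).integrable one_le_two).const_mul _]
            have : ∀ i, ∫ ω, 2 * μN i * V' NG ω i ∂μ = 2 * μN i ^ 2 := by
              intro i
              rw [MeasureTheory.integral_const_mul, hmeanN i, ← hμNe]
              ring
            rw [Finset.sum_congr rfl fun i _ => this i, ← Finset.mul_sum, hμNsq]
            ring
          rw [hmid, hμNsq]
          ring
  -- exponential bound
  have hexp : (1 + 2 / (Ns:ℝ)) ^ NG ≤ Real.exp (2 * NG / Ns) := by
    have h1 : (1:ℝ) + 2 / Ns ≤ Real.exp (2 / Ns) := by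
      have := Real.add_one_le_exp ((2:ℝ) / Ns)
      linarith
    have h2 : ((1:ℝ) + 2 / Ns) ^ NG ≤ (Real.exp (2 / Ns)) ^ NG :=
      pow_le_pow_left₀ (by positivity) h1 NG
    rwa [← Real.exp_nat_mul, show (NG:ℝ) * (2 / Ns) = 2 * NG / Ns by ring] at h2
  have hDle : ∫ ω, D ω ∂μ ≤ Real.exp (2 * NG / Ns) - 1 := by
    rw [hDeq]
    have := le_trans hsqN hexp
    linarith
  have hfinal : ∫ ω, (w ⬝ᵥ V NG ω - w ⬝ᵥ μN) ^ 2 ∂μ ≤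
      2 ^ n * (Real.exp (2 * NG / Ns) - 1) := by
    rw [hI]
    refine le_trans hIle ?_
    have hD0 : 0 ≤ ∫ ω, D ω ∂μ :=
      integral_nonneg fun ω => Finset.sum_nonneg fun i _ => sq_nonneg _
    have h0 : (0:ℝ) ≤ ∑ i, w i ^ 2 := Finset.sum_nonneg fun i _ => sq_nonneg _
    exact mul_le_mul hwsum hDle hD0 (by positivity)
  calc Real.sqrt (∫ ω, (w ⬝ᵥ V NG ω - w ⬝ᵥ μN) ^ 2 ∂μ)
      ≤ Real.sqrt (2 ^ n * (Real.exp (2 * NG / Ns) - 1)) := Real.sqrt_le_sqrt hfinal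
    _ = Real.sqrt (2 ^ n) * Real.sqrt (Real.exp (2 * NG / Ns) - 1) :=
        Real.sqrt_mul (by positivity) _
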